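/- Let A, Â = A + E ∈ ℝ^{n×n} be symmetric, and suppose A has a simple largest eigenvalue λ with unit eigenvector q₁, eigengap g = min over the other eigenvalues ϱ of |λ − ϱ| > 0. Write the eigendecomposition Q = [q₁ | Q₂] orthogonal with QᵀAQ = diag(λ, Λ₂) and QᵀEQ = [[ε, eᵀ],[e, E₂₂]]. If ‖E‖_F ≤ g/5, then there exists p ∈ ℝ^{n−1} with ‖p‖₂ ≤ (4/g)‖e‖₂ such that q̂₁ = (q₁ + Q₂ p)/√(1 + pᵀp) is a unit eigenvector of Â for its largest eigenvalue, and ‖q₁ q₁ᵀ − q̂₁ q̂₁ᵀ‖₂ ≤ (4/g)‖e‖₂. -/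

import Mathlib

open scoped BigOperators

/-- Euclidean (ℓ₂) norm of a finitely-indexed real vector. -/
noncomputable def enorm {ι : Type*} [Fintype ι] (v : ι → ℝ) : ℝ :=
  Real.sqrt (∑ i, v i ^ 2)

/-- Euclidean inner product of two real vectors. -/
def ip {ι : Type*} [Fintype ι] (u v : ι → ℝ) : ℝ := ∑ i, u i * v i

/-- Spectral (ℓ₂ operator) norm of a real matrix: supremum of ‖A x‖ over unit vectors x. -/
noncomputable def specNorm {m n : Type*} [Fintype m] [Fintype n] (A : Matrix m n ℝ) : ℝ :=
  sSup ((fun x : n → ℝ => _root_.enorm (A.mulVec x)) '' {x | _root_.enorm x = 1})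

/-- Frobenius norm of a real matrix. -/
noncomputable def frobNorm {m n : Type*} [Fintype m] [Fintype n] (A : Matrix m n ℝ) : ℝ :=
  Real.sqrt (∑ i, ∑ j, A i j ^ 2)

/-- Smallest singular value of a real matrix: infimum of ‖A x‖ over unit vectors x. -/
noncomputable def smin {m n : Type*} [Fintype m] [Fintype n] (A : Matrix m n ℝ) : ℝ :=
  sInf ((fun x : n → ℝ => _root_.enorm (A.mulVec x)) '' {x | _root_.enorm x = 1})

/-- Rank-one outer product u vᵀ. -/
def outer {ι : Type*} (u v : ι → ℝ) : Matrix ι ι ℝ := Matrix.of fun i j => u i * v j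

/-- Column submatrix given by a finite index set. -/
def colSub {m n : Type*} (A : Matrix m n ℝ) (s : Finset n) : Matrix m s ℝ :=
  Matrix.of fun i j => A i j

open Matrix

section Helpers

set_option linter.unusedSectionVars false

variable {ι κ : Type*} [Fintype ι] [Fintype κ]

lemma ip_eq_dot (u v : ι → ℝ) : ip u v = u ⬝ᵥ v := rfl

lemma enorm_nonneg' (v : ι → ℝ) : 0 ≤ _root_.enorm v := Real.sqrt_nonneg _

lemma enorm_sq (v : ι → ℝ) : _root_.enorm v ^ 2 = ∑ i, v i ^ 2 :=
  Real.sq_sqrt (by positivity)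

lemma sum_sq_of_enorm_one {v : ι → ℝ} (h : _root_.enorm v = 1) : ∑ i, v i ^ 2 = 1 := by
  rw [← enorm_sq, h, one_pow]

lemma enorm_eq_one_of_sum_sq {v : ι → ℝ} (h : ∑ i, v i ^ 2 = 1) : _root_.enorm v = 1 := by
  rw [_root_.enorm, h, Real.sqrt_one]

lemma ip_mulVec_orth {ι : Type*} [Fintype ι] [DecidableEq ι]
    (Q : Matrix ι ι ℝ) (hQ : Qᵀ * Q = 1) (x y : ι → ℝ) :
    ip (Q *ᵥ x) (Q *ᵥ y) = ip x y := by
  rw [ip_eq_dot, dotProduct_mulVec, ← mulVec_transpose, mulVec_mulVec, hQ, one_mulVec, ip_eq_dot]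

lemma sum_sq_mulVec_orth {ι : Type*} [Fintype ι] [DecidableEq ι]
    (Q : Matrix ι ι ℝ) (hQ : Qᵀ * Q = 1) (x : ι → ℝ) :
    ∑ i, (Q *ᵥ x) i ^ 2 = ∑ i, x i ^ 2 := by
  have := ip_mulVec_orth Q hQ x x
  simpa [ip, sq] using this

lemma enorm_mulVec_orth {ι : Type*} [Fintype ι] [DecidableEq ι]
    (Q : Matrix ι ι ℝ) (hQ : Qᵀ * Q = 1) (x : ι → ℝ) :
    _root_.enorm (Q *ᵥ x) = _root_.enorm x := by
  rw [_root_.enorm, _root_.enorm, sum_sq_mulVec_orth Q hQ]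

lemma frob_sq_eq_trace (A : Matrix ι κ ℝ) : ∑ i, ∑ j, A i j ^ 2 = trace (Aᵀ * A) := by
  rw [trace]
  simp only [diag, mul_apply, transpose_apply]
  rw [Finset.sum_comm]
  simp [sq]

lemma frob_conj {ι : Type*} [Fintype ι] [DecidableEq ι] (Q E : Matrix ι ι ℝ)
    (hQ : Qᵀ * Q = 1) : frobNorm (Qᵀ * E * Q) = frobNorm E := by
  have hQQ : Q * Qᵀ = 1 := by rw [← mul_eq_one_comm, hQ]
  unfold frobNorm
  congr 1
  rw [frob_sq_eq_trace, frob_sq_eq_trace]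
  have h : (Qᵀ * E * Q)ᵀ * (Qᵀ * E * Q) = Qᵀ * (Eᵀ * E) * Q := by
    simp only [transpose_mul, transpose_transpose]
    calc Qᵀ * (Eᵀ * Q) * (Qᵀ * E * Q) = Qᵀ * Eᵀ * (Q * Qᵀ) * (E * Q) := by
          simp only [Matrix.mul_assoc]
      _ = Qᵀ * (Eᵀ * E) * Q := by rw [hQQ, Matrix.mul_one]; simp only [Matrix.mul_assoc]
  rw [h, Matrix.trace_mul_comm, ← Matrix.mul_assoc, hQQ, Matrix.one_mul]

lemma enorm_mulVec_le (M : Matrix ι κ ℝ) (x : κ → ℝ) :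
    _root_.enorm (M *ᵥ x) ≤ frobNorm M * _root_.enorm x := by
  have h1 : ∀ i, (M *ᵥ x) i ^ 2 ≤ (∑ j, M i j ^ 2) * ∑ j, x j ^ 2 := fun i =>
    Finset.sum_mul_sq_le_sq_mul_sq _ _ _
  have h2 : ∑ i, (M *ᵥ x) i ^ 2 ≤ (∑ i, ∑ j, M i j ^ 2) * ∑ j, x j ^ 2 := by
    rw [Finset.sum_mul]
    exact Finset.sum_le_sum fun i _ => h1 i
  unfold _root_.enorm frobNorm
  rw [← Real.sqrt_mul (by positivity)]
  exact Real.sqrt_le_sqrt h2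

lemma enorm_add_le_real (x y : ι → ℝ) : _root_.enorm (x + y) ≤ _root_.enorm x + _root_.enorm y := by
  have hcs : ∑ i, x i * y i ≤ _root_.enorm x * _root_.enorm y := by
    have h1 : (∑ i, x i * y i) ≤ |∑ i, x i * y i| := le_abs_self _
    have h2 : |∑ i, x i * y i| = Real.sqrt ((∑ i, x i * y i) ^ 2) :=
      (Real.sqrt_sq_eq_abs _).symm
    have h3 : Real.sqrt ((∑ i, x i * y i) ^ 2)
        ≤ Real.sqrt ((∑ i, x i ^ 2) * ∑ i, y i ^ 2) :=
      Real.sqrt_le_sqrt (Finset.sum_mul_sq_le_sq_mul_sq _ _ _)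
    calc ∑ i, x i * y i ≤ Real.sqrt ((∑ i, x i * y i) ^ 2) := h2 ▸ h1
      _ ≤ Real.sqrt ((∑ i, x i ^ 2) * ∑ i, y i ^ 2) := h3
      _ = _root_.enorm x * _root_.enorm y := Real.sqrt_mul (Finset.sum_nonneg fun i _ => sq_nonneg (x i)) _
  have hsum : ∑ i, (x + y) i ^ 2 ≤ (_root_.enorm x + _root_.enorm y) ^ 2 := by
    have hx : ∑ i, x i ^ 2 = _root_.enorm x ^ 2 := (enorm_sq x).symm
    have hy : ∑ i, y i ^ 2 = _root_.enorm y ^ 2 := (enorm_sq y).symm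
    have : ∑ i, (x + y) i ^ 2 = ∑ i, x i ^ 2 + 2 * ∑ i, x i * y i + ∑ i, y i ^ 2 := by
      rw [Finset.mul_sum, ← Finset.sum_add_distrib, ← Finset.sum_add_distrib]
      exact Finset.sum_congr rfl fun i _ => by simp [Pi.add_apply]; ring
    rw [this, hx, hy]; nlinarith [hcs]
  calc _root_.enorm (x + y) = Real.sqrt (∑ i, (x + y) i ^ 2) := rfl
    _ ≤ Real.sqrt ((_root_.enorm x + _root_.enorm y) ^ 2) := Real.sqrt_le_sqrt hsum
    _ = _root_.enorm x + _root_.enorm y := Real.sqrt_sq (add_nonneg (enorm_nonneg' x) (enorm_nonneg' y))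

lemma entry_abs_le_frob (A : Matrix ι κ ℝ) (i : ι) (j : κ) : |A i j| ≤ frobNorm A := by
  rw [← Real.sqrt_sq_eq_abs]
  apply Real.sqrt_le_sqrt
  calc A i j ^ 2 ≤ ∑ j', A i j' ^ 2 :=
        Finset.single_le_sum (f := fun j' => A i j' ^ 2) (fun _ _ => sq_nonneg _)
          (Finset.mem_univ j)
    _ ≤ ∑ i', ∑ j', A i' j' ^ 2 :=
        Finset.single_le_sum (f := fun i' => ∑ j', A i' j' ^ 2)
          (fun _ _ => Finset.sum_nonneg fun _ _ => sq_nonneg _) (Finset.mem_univ i)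

lemma mulVec_diagonal_single {n : Type*} [Fintype n] [DecidableEq n] (μs : n → ℝ) (k : n) :
    Matrix.diagonal μs *ᵥ Pi.single k 1 = μs k • (Pi.single k 1 : n → ℝ) := by
  funext i
  rw [mulVec_diagonal]
  by_cases h : i = k <;> simp [h, Pi.single_apply]

lemma col_eig {n : Type*} [Fintype n] [DecidableEq n] (U B : Matrix n n ℝ) (μs : n → ℝ)
    (hUtU : Uᵀ * U = 1) (hspec : B = U * diagonal μs * Uᵀ) (k : n) :
    B *ᵥ (fun i => U i k) = μs k • (fun i => U i k) := by
  have hcol : (fun i => U i k) = U *ᵥ Pi.single k 1 := by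
    funext i; simp [mulVec_single]
  rw [hcol, hspec, ← mulVec_mulVec, ← mulVec_mulVec]
  have h1 : Uᵀ *ᵥ (U *ᵥ Pi.single k 1) = (Pi.single k 1 : n → ℝ) := by
    rw [mulVec_mulVec, hUtU, one_mulVec]
  rw [h1, mulVec_diagonal_single, mulVec_smul]

lemma col_unit {n : Type*} [Fintype n] [DecidableEq n] (U : Matrix n n ℝ)
    (hUtU : Uᵀ * U = 1) (k : n) : ∑ i, (U i k) ^ 2 = 1 := by
  have := congrFun (congrFun hUtU k) k
  simpa [mul_apply, sq] using this

lemma diag_le_max {n : Type*} [Fintype n] [DecidableEq n] (U B : Matrix n n ℝ) (μs : n → ℝ)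
    (hUUt : U * Uᵀ = 1) (hspec : B = U * diagonal μs * Uᵀ) (μ : ℝ) (hμ : ∀ k, μs k ≤ μ)
    (i : n) : B i i ≤ μ := by
  have hrow : ∑ k, (U i k) ^ 2 = 1 := by
    have := congrFun (congrFun hUUt i) i
    simpa [mul_apply, sq] using this
  have hBii : B i i = ∑ k, μs k * (U i k) ^ 2 := by
    rw [hspec, mul_apply]
    simp only [mul_diagonal, transpose_apply]
    exact Finset.sum_congr rfl fun k _ => by ring
  rw [hBii]
  calc ∑ k, μs k * U i k ^ 2 ≤ ∑ k, μ * U i k ^ 2 :=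
        Finset.sum_le_sum fun k _ => mul_le_mul_of_nonneg_right (hμ k) (sq_nonneg _)
    _ = μ := by rw [← Finset.mul_sum, hrow, mul_one]

lemma eig_le_max {n : Type*} [Fintype n] [DecidableEq n] (U B : Matrix n n ℝ) (μs : n → ℝ)
    (hUtU : Uᵀ * U = 1) (hUUt : U * Uᵀ = 1) (hspec : B = U * diagonal μs * Uᵀ)
    (μ : ℝ) (hμ : ∀ k, μs k ≤ μ)
    (ν : ℝ) (x : n → ℝ) (hx : x ≠ 0) (heig : B *ᵥ x = ν • x) : ν ≤ μ := by
  set w := Uᵀ *ᵥ x with hw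
  have hwne : w ≠ 0 := by
    intro h
    apply hx
    have : U *ᵥ w = x := by rw [hw, mulVec_mulVec, hUUt, one_mulVec]
    rw [← this, h, mulVec_zero]
  have hDw : diagonal μs *ᵥ w = ν • w := by
    have h1 : Uᵀ *ᵥ (B *ᵥ x) = diagonal μs *ᵥ w := by
      rw [hspec, hw]
      simp only [mulVec_mulVec, ← Matrix.mul_assoc, hUtU, Matrix.one_mul]
    rw [heig] at h1
    rw [← h1, hw, mulVec_smul]
  obtain ⟨k, hk⟩ := Function.ne_iff.mp hwne
  have hcf := congrFun hDw k
  rw [mulVec_diagonal] at hcf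
  have hνk : μs k = ν := by
    have h2 : μs k * w k = ν * w k := hcf
    exact mul_right_cancel₀ hk h2
  rw [← hνk]; exact hμ k

lemma real_spectral {n : ℕ} (B : Matrix (Fin n) (Fin n) ℝ) (hB : B.IsHermitian) :
    ∃ (U : Matrix (Fin n) (Fin n) ℝ) (μs : Fin n → ℝ),
      Uᵀ * U = 1 ∧ U * Uᵀ = 1 ∧ B = U * diagonal μs * Uᵀ := by
  refine ⟨hB.eigenvectorUnitary, hB.eigenvalues, ?_, ?_, ?_⟩
  · have := Unitary.coe_star_mul_self hB.eigenvectorUnitary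
    rwa [Matrix.star_eq_conjTranspose, conjTranspose_eq_transpose_of_trivial] at this
  · have := Unitary.coe_mul_star_self hB.eigenvectorUnitary
    rwa [Unitary.coe_star, Matrix.star_eq_conjTranspose,
      conjTranspose_eq_transpose_of_trivial] at this
  · have := hB.spectral_theorem
    rw [Unitary.conjStarAlgAut_apply, Matrix.star_eq_conjTranspose,
      conjTranspose_eq_transpose_of_trivial] at this
    simpa using this

lemma outer_diff_mulVec (u q x : ι → ℝ) :
    (outer u u - outer q q) *ᵥ x = (ip u x) • u - (ip q x) • q := by
  funext i
  simp only [mulVec, Matrix.sub_apply, dotProduct, outer, of_apply, Pi.sub_apply, Pi.smul_apply,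
    smul_eq_mul, ip]
  simp only [sub_mul]
  rw [Finset.sum_sub_distrib, Finset.sum_mul, Finset.sum_mul]
  congr 1
  · exact Finset.sum_congr rfl fun j _ => by ring
  · exact Finset.sum_congr rfl fun j _ => by ring

lemma proj_diff_bound (u q : ι → ℝ) (hu : ∑ i, u i ^ 2 = 1) (hq : ∑ i, q i ^ 2 = 1)
    (x : ι → ℝ) (hx : ∑ i, x i ^ 2 = 1) :
    _root_.enorm ((outer u u - outer q q) *ᵥ x) ≤ Real.sqrt (1 - (ip u q) ^ 2) := by
  set c := ip u q with hc
  set a := ip u x with ha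
  set b := ip q x with hb
  have hcsq : c ^ 2 ≤ 1 := by
    have := Finset.sum_mul_sq_le_sq_mul_sq Finset.univ u q
    rw [hu, hq] at this; simpa [hc, ip] using this
  have hnorm : ∑ i, ((ip u x) • u - (ip q x) • q) i ^ 2 = a ^ 2 + b ^ 2 - 2 * a * b * c := by
    simp only [Pi.sub_apply, Pi.smul_apply, smul_eq_mul, ← ha, ← hb]
    have h : ∀ i, (a * u i - b * q i) ^ 2
        = a ^ 2 * u i ^ 2 + b ^ 2 * q i ^ 2 - 2 * a * b * (u i * q i) := fun i => by ring
    simp only [h, Finset.sum_sub_distrib, Finset.sum_add_distrib, ← Finset.mul_sum, hu, hq]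
    have huq : ∑ i, u i * q i = c := rfl
    rw [huq]; ring
  rw [outer_diff_mulVec]
  rcases eq_or_lt_of_le hcsq with hce | hclt
  · have hz : ∑ i, (c * u i - q i) ^ 2 = 0 := by
      have h : ∀ i, (c * u i - q i) ^ 2 = c ^ 2 * u i ^ 2 + q i ^ 2 - 2 * c * (u i * q i) :=
        fun i => by ring
      simp only [h, Finset.sum_sub_distrib, Finset.sum_add_distrib, ← Finset.mul_sum, hu, hq]
      have huq : ∑ i, u i * q i = c := rfl
      rw [huq]; nlinarith [hce]
    have hqc : ∀ i, q i = c * u i := by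
      intro i
      have h0 : (c * u i - q i) ^ 2 = 0 :=
        le_antisymm (hz ▸ Finset.single_le_sum (f := fun i => (c * u i - q i) ^ 2)
          (fun j _ => sq_nonneg _) (Finset.mem_univ i)) (sq_nonneg _)
      nlinarith [h0]
    have hbca : b = c * a := by
      simp only [hb, ha, ip]
      rw [Finset.mul_sum]
      exact Finset.sum_congr rfl fun i _ => by rw [hqc i]; ring
    have hzz : (a • u - b • q) = 0 := by
      funext i
      simp only [Pi.sub_apply, Pi.smul_apply, smul_eq_mul, Pi.zero_apply, hqc i, hbca]
      linear_combination (-(a * u i)) * hce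
    rw [← ha, ← hb, hzz]
    simp [_root_.enorm]
  · have key : a ^ 2 + b ^ 2 - 2 * a * b * c ≤ 1 - c ^ 2 := by
      have hy : (0:ℝ) ≤ ∑ i, ((1 - c^2) * x i - (a - c*b) * u i - (b - c*a) * q i) ^ 2 :=
        Finset.sum_nonneg fun i _ => sq_nonneg _
      have hexp : ∑ i, ((1 - c^2) * x i - (a - c*b) * u i - (b - c*a) * q i) ^ 2
          = (1 - c^2)^2 - (1 - c^2) * (a^2 + b^2 - 2*a*b*c) := by
        have h : ∀ i, ((1 - c^2) * x i - (a - c*b) * u i - (b - c*a) * q i) ^ 2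
            = (1-c^2)^2 * x i^2 + (a-c*b)^2 * u i^2 + (b-c*a)^2 * q i^2
              - 2*(1-c^2)*(a-c*b) * (u i * x i) - 2*(1-c^2)*(b-c*a) * (q i * x i)
              + 2*(a-c*b)*(b-c*a) * (u i * q i) := fun i => by ring
        simp only [h, Finset.sum_sub_distrib, Finset.sum_add_distrib, ← Finset.mul_sum,
          hu, hq, hx]
        have hux : ∑ i, u i * x i = a := rfl
        have hqx : ∑ i, q i * x i = b := rfl
        have huq : ∑ i, u i * q i = c := rfl
        rw [hux, hqx, huq]; ring
      rw [hexp] at hy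
      nlinarith [hy]
    unfold _root_.enorm
    rw [hnorm]
    exact Real.sqrt_le_sqrt key

end Helpers

section Key

lemma key_bound {m : ℕ} (F : Matrix (Fin (m + 1)) (Fin (m + 1)) ℝ) (d : Fin (m + 1) → ℝ)
    (e : Fin m → ℝ) (he : ∀ i, e i = F i.succ 0) (g μ : ℝ) (hgpos : 0 < g)
    (hbnd : ∀ i : Fin m, 4 * g / 5 ≤ μ - d i.succ)
    (hE22 : frobNorm (Matrix.of fun i j : Fin m => F i.succ j.succ) ≤ g / 5)
    (v : Fin (m + 1) → ℝ) (heig : (Matrix.diagonal d + F) *ᵥ v = μ • v) :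
    _root_.enorm (fun i : Fin m => v i.succ) * (3 * g / 5) ≤ _root_.enorm e * |v 0| := by
  set w : Fin m → ℝ := fun i => v i.succ with hw
  set E22 : Matrix (Fin m) (Fin m) ℝ := Matrix.of fun i j : Fin m => F i.succ j.succ with hE22d
  set xv : Fin m → ℝ := fun i => e i * v 0 with hxv
  set yv : Fin m → ℝ := E22 *ᵥ w with hyv
  have hrow : ∀ i : Fin m, (μ - d i.succ) * w i = xv i + yv i := by
    intro i
    have h1 := congrFun heig i.succ
    rw [Matrix.add_mulVec] at h1
    have h2 : (Matrix.diagonal d *ᵥ v) i.succ = d i.succ * v i.succ := mulVec_diagonal _ _ _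
    have h3 : (F *ᵥ v) i.succ
        = F i.succ 0 * v 0 + ∑ j : Fin m, F i.succ j.succ * v j.succ := by
      show ∑ j, F i.succ j * v j = _
      rw [Fin.sum_univ_succ]
    rw [Pi.add_apply, h2, h3, Pi.smul_apply, smul_eq_mul] at h1
    have h6 : yv i = ∑ j : Fin m, F i.succ j.succ * v j.succ := rfl
    have h7 : xv i = F i.succ 0 * v 0 := by
      rw [show xv i = e i * v 0 from rfl, he i]
    rw [h6, h7, hw]
    linarith [h1]
  have hstepA : (4 * g / 5) * _root_.enorm w ≤ _root_.enorm (xv + yv) := by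
    have hAsum : ∑ i, ((4 * g / 5) * w i) ^ 2 ≤ ∑ i, ((xv + yv) i) ^ 2 := by
      refine Finset.sum_le_sum fun i _ => ?_
      have hwi : ((4 * g / 5) * w i) ^ 2 ≤ ((μ - d i.succ) * w i) ^ 2 := by
        have hb := hbnd i
        have h45 : (4 * g / 5) ^ 2 ≤ (μ - d i.succ) ^ 2 := by nlinarith [hb, hgpos]
        rw [mul_pow, mul_pow]
        exact mul_le_mul_of_nonneg_right h45 (sq_nonneg (w i))
      calc ((4 * g / 5) * w i) ^ 2 ≤ ((μ - d i.succ) * w i) ^ 2 := hwi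
        _ = ((xv + yv) i) ^ 2 := by rw [hrow i]; rfl
    have hmul : (4 * g / 5) * _root_.enorm w = Real.sqrt (∑ i, ((4 * g / 5) * w i) ^ 2) := by
      have h8 : ∑ i, ((4 * g / 5) * w i) ^ 2 = (4 * g / 5) ^ 2 * ∑ i, w i ^ 2 := by
        rw [Finset.mul_sum]
        exact Finset.sum_congr rfl fun i _ => by ring
      rw [h8, Real.sqrt_mul (sq_nonneg _), Real.sqrt_sq (by positivity)]
      rfl
    rw [hmul]
    exact Real.sqrt_le_sqrt hAsum
  have hstepB : _root_.enorm (xv + yv) ≤ _root_.enorm xv + _root_.enorm yv := enorm_add_le_real _ _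
  have hstepC : _root_.enorm xv = _root_.enorm e * |v 0| := by
    unfold _root_.enorm
    have h9 : ∑ i, xv i ^ 2 = (∑ i, e i ^ 2) * (v 0) ^ 2 := by
      rw [Finset.sum_mul]
      exact Finset.sum_congr rfl fun i _ => by rw [hxv]; ring
    rw [h9, Real.sqrt_mul (by positivity), Real.sqrt_sq_eq_abs]
  have hstepD : _root_.enorm yv ≤ (g / 5) * _root_.enorm w := by
    calc _root_.enorm yv ≤ frobNorm E22 * _root_.enorm w := enorm_mulVec_le _ _
      _ ≤ (g / 5) * _root_.enorm w := mul_le_mul_of_nonneg_right hE22 (enorm_nonneg' _)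
  nlinarith [hstepA, hstepB, hstepC, hstepD]

end Key

set_option maxHeartbeats 1000000 in
/-- Eigenvector perturbation (Golub–Van Loan): A, Â = A + E symmetric,
Q = [q₁ | Q₂] orthogonal with QᵀAQ = diag(λ, Λ₂), λ = d 0 the simple largest
eigenvalue with eigengap g = minᵢ |λ − dᵢ| > 0, e the off-diagonal block of QᵀEQ.
If ‖E‖_F ≤ g/5 then there is p with ‖p‖ ≤ (4/g)‖e‖ such that
q̂₁ = (q₁ + Q₂p)/√(1 + pᵀp) is a unit eigenvector of Â for its largest eigenvalue
and ‖q₁q₁ᵀ − q̂₁q̂₁ᵀ‖₂ ≤ (4/g)‖e‖. -/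
theorem stmt_18 {m : ℕ} [NeZero m]
    (A E : Matrix (Fin (m + 1)) (Fin (m + 1)) ℝ) (hA : A.IsSymm) (hE : E.IsSymm)
    (Q : Matrix (Fin (m + 1)) (Fin (m + 1)) ℝ) (hQ : Qᵀ * Q = 1)
    (d : Fin (m + 1) → ℝ) (hdiag : Qᵀ * A * Q = Matrix.diagonal d)
    (lam : ℝ) (hlam : d 0 = lam)
    (hsimple : ∀ i : Fin m, d i.succ < lam)
    (g : ℝ)
    (hg : g = Finset.univ.inf' Finset.univ_nonempty (fun i : Fin m => |lam - d i.succ|))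
    (hgpos : 0 < g)
    (e : Fin m → ℝ) (he : e = fun i => (Qᵀ * E * Q) i.succ 0)
    (hEF : frobNorm E ≤ g / 5) :
    ∃ p : Fin m → ℝ, _root_.enorm p ≤ (4 / g) * _root_.enorm e ∧
      ∀ q1 : Fin (m + 1) → ℝ, q1 = (fun i => Q i 0) →
      ∀ Q2 : Matrix (Fin (m + 1)) (Fin m) ℝ, Q2 = Matrix.of (fun i j => Q i j.succ) →
      ∀ qhat1 : Fin (m + 1) → ℝ,
        qhat1 = (Real.sqrt (1 + ip p p))⁻¹ • (q1 + Q2.mulVec p) →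
        _root_.enorm qhat1 = 1 ∧
        (∃ μ : ℝ, (A + E).mulVec qhat1 = μ • qhat1 ∧
          ∀ (ν : ℝ) (x : Fin (m + 1) → ℝ), x ≠ 0 → (A + E).mulVec x = ν • x → ν ≤ μ) ∧
        specNorm (outer q1 q1 - outer qhat1 qhat1) ≤ (4 / g) * _root_.enorm e := by
  classical
  have hQQ : Q * Qᵀ = 1 := mul_eq_one_comm.mp hQ
  set F : Matrix (Fin (m + 1)) (Fin (m + 1)) ℝ := Qᵀ * E * Q with hFdef
  set B : Matrix (Fin (m + 1)) (Fin (m + 1)) ℝ := Qᵀ * (A + E) * Q with hBdef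
  have hBeq : B = Matrix.diagonal d + F := by
    rw [hBdef, hFdef, ← hdiag, Matrix.mul_add, Matrix.add_mul]
  have hFsymm : Fᵀ = F := by
    rw [hFdef, transpose_mul, transpose_mul, transpose_transpose, hE.eq, Matrix.mul_assoc]
  have hBherm : B.IsHermitian := by
    rw [Matrix.IsHermitian, Matrix.conjTranspose_eq_transpose_of_trivial, hBeq,
      transpose_add, diagonal_transpose, hFsymm]
  obtain ⟨U, μs, hUtU, hUUt, hspec⟩ := real_spectral B hBherm
  obtain ⟨k0, -, hk0⟩ := Finset.exists_max_image (Finset.univ : Finset (Fin (m + 1))) μs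
    ⟨0, Finset.mem_univ 0⟩
  set μ := μs k0 with hμdef
  have hμmax : ∀ k, μs k ≤ μ := fun k => hk0 k (Finset.mem_univ k)
  set v0 : Fin (m + 1) → ℝ := fun i => U i k0 with hv0def
  have heig0 : B *ᵥ v0 = μ • v0 := col_eig U B μs hUtU hspec k0
  have hunit0 : ∑ i, v0 i ^ 2 = 1 := col_unit U hUtU k0
  have hFfrob : frobNorm F ≤ g / 5 := by rw [hFdef, frob_conj Q E hQ]; exact hEF
  have hgap : ∀ i : Fin m, d i.succ ≤ lam - g := by
    intro i
    have h1 : g ≤ |lam - d i.succ| := by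
      rw [hg]; exact Finset.inf'_le _ (Finset.mem_univ i)
    have h2 : |lam - d i.succ| = lam - d i.succ := abs_of_pos (by linarith [hsimple i])
    linarith [h2 ▸ h1]
  have hB00 : B 0 0 ≤ μ := diag_le_max U B μs hUUt hspec μ hμmax 0
  have hB00eq : B 0 0 = lam + F 0 0 := by
    rw [hBeq]
    simp [Matrix.add_apply, Matrix.diagonal_apply_eq, hlam]
  have hF00 : |F 0 0| ≤ g / 5 := le_trans (entry_abs_le_frob F 0 0) hFfrob
  have hμlow : lam - g / 5 ≤ μ := by
    have := abs_le.mp hF00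
    linarith [hB00eq ▸ hB00]
  have hbnd : ∀ i : Fin m, 4 * g / 5 ≤ μ - d i.succ := by
    intro i; have := hgap i; linarith
  have hE22frob : frobNorm (Matrix.of fun i j : Fin m => F i.succ j.succ) ≤ g / 5 := by
    refine le_trans ?_ hFfrob
    unfold frobNorm
    apply Real.sqrt_le_sqrt
    have hstep1 : ∀ i : Fin m, ∑ j : Fin m, F i.succ j.succ ^ 2
        ≤ ∑ j : Fin (m + 1), F i.succ j ^ 2 := by
      intro i
      rw [Fin.sum_univ_succ]
      exact le_add_of_nonneg_left (sq_nonneg _)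
    calc ∑ i : Fin m, ∑ j : Fin m, ((Matrix.of fun i j : Fin m => F i.succ j.succ) i j) ^ 2
        = ∑ i : Fin m, ∑ j : Fin m, F i.succ j.succ ^ 2 := rfl
      _ ≤ ∑ i : Fin m, ∑ j : Fin (m + 1), F i.succ j ^ 2 :=
          Finset.sum_le_sum fun i _ => hstep1 i
      _ ≤ ∑ i : Fin (m + 1), ∑ j : Fin (m + 1), F i j ^ 2 := by
          rw [Fin.sum_univ_succ (f := fun i : Fin (m + 1) => ∑ j : Fin (m + 1), F i j ^ 2)]
          exact le_add_of_nonneg_left (Finset.sum_nonneg fun _ _ => sq_nonneg _)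
  have heF : ∀ i : Fin m, e i = F i.succ 0 := fun i => congrFun he i
  have hkey0 : _root_.enorm (fun i : Fin m => v0 i.succ) * (3 * g / 5) ≤ _root_.enorm e * |v0 0| :=
    key_bound F d e heF g μ hgpos hbnd hE22frob v0 (hBeq ▸ heig0)
  -- v0 0 ≠ 0
  have hsplit0 : ∑ i : Fin (m + 1), v0 i ^ 2
      = v0 0 ^ 2 + ∑ i : Fin m, v0 i.succ ^ 2 :=
    Fin.sum_univ_succ (f := fun i => v0 i ^ 2)
  have hv00ne : v0 0 ≠ 0 := by
    intro h0
    rw [h0, abs_zero, mul_zero] at hkey0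
    have hwz : _root_.enorm (fun i : Fin m => v0 i.succ) = 0 :=
      le_antisymm (by nlinarith [hkey0, enorm_nonneg' (fun i : Fin m => v0 i.succ), hgpos])
        (enorm_nonneg' _)
    have hsz : ∑ i : Fin m, v0 i.succ ^ 2 = 0 := by
      have := enorm_sq (fun i : Fin m => v0 i.succ)
      rw [hwz] at this
      simpa using this.symm
    rw [hsplit0, h0, hsz] at hunit0
    norm_num at hunit0
  -- sign normalization
  set σ : ℝ := if v0 0 < 0 then -1 else 1 with hσdef
  have hσv : σ * v0 0 = |v0 0| := by
    by_cases h : v0 0 < 0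
    · rw [hσdef, if_pos h, abs_of_neg h]; ring
    · rw [hσdef, if_neg h, abs_of_nonneg (not_lt.mp h)]; ring
  have hσ2 : σ ^ 2 = 1 := by
    by_cases h : v0 0 < 0 <;> simp [hσdef, h]
  set v : Fin (m + 1) → ℝ := σ • v0 with hvdef
  have hv0pos : 0 < v 0 := by
    have : v 0 = |v0 0| := hσv
    rw [this]
    exact abs_pos.mpr hv00ne
  have hunit : ∑ i, v i ^ 2 = 1 := by
    have : ∀ i, v i ^ 2 = σ ^ 2 * v0 i ^ 2 := fun i => by
      rw [hvdef]; simp [mul_pow]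
    simp only [this, hσ2, one_mul]
    exact hunit0
  have heig : B *ᵥ v = μ • v := by
    rw [hvdef, mulVec_smul, heig0, smul_comm]
  have hkey : _root_.enorm (fun i : Fin m => v i.succ) * (3 * g / 5) ≤ _root_.enorm e * v 0 := by
    have h1 : (fun i : Fin m => v i.succ) = σ • (fun i : Fin m => v0 i.succ) := rfl
    have h2 : _root_.enorm (fun i : Fin m => v i.succ) = _root_.enorm (fun i : Fin m => v0 i.succ) := by
      unfold _root_.enorm
      congr 1
      refine Finset.sum_congr rfl fun i _ => ?_
      show (σ * v0 i.succ) ^ 2 = v0 i.succ ^ 2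
      rw [mul_pow, hσ2, one_mul]
    have h3 : v 0 = |v0 0| := hσv
    rw [h2, h3]
    exact hkey0
  have hsplit : v 0 ^ 2 + ∑ i : Fin m, v i.succ ^ 2 = 1 := by
    rw [← Fin.sum_univ_succ (f := fun i => v i ^ 2)]
    exact hunit
  have hv0le1 : v 0 ≤ 1 := by
    nlinarith [hsplit, Finset.sum_nonneg (s := (Finset.univ : Finset (Fin m)))
      (f := fun i => v i.succ ^ 2) (fun i _ => sq_nonneg _), hv0pos]
  -- the tail norm bound
  have hwle : _root_.enorm (fun i : Fin m => v i.succ) ≤ (4 / g) * _root_.enorm e := by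
    have h1 : _root_.enorm (fun i : Fin m => v i.succ) * (3 * g / 5) ≤ _root_.enorm e :=
      hkey.trans (by nlinarith [enorm_nonneg' e, hv0le1, hv0pos])
    rw [div_mul_eq_mul_div, le_div_iff₀ hgpos]
    nlinarith [h1, enorm_nonneg' e, enorm_nonneg' (fun i : Fin m => v i.succ), hgpos]
  -- define p
  refine ⟨fun i => v i.succ / v 0, ?_, ?_⟩
  · -- norm of p
    have hp : _root_.enorm (fun i : Fin m => v i.succ / v 0)
        = _root_.enorm (fun i : Fin m => v i.succ) * (v 0)⁻¹ := by
      unfold _root_.enorm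
      rw [← Real.sqrt_sq (le_of_lt (inv_pos.mpr hv0pos)),
        ← Real.sqrt_mul (by positivity)]
      congr 1
      rw [Finset.sum_mul]
      refine Finset.sum_congr rfl fun i _ => ?_
      show (v i.succ / v 0) ^ 2 = v i.succ ^ 2 * (v 0)⁻¹ ^ 2
      rw [div_eq_mul_inv]; ring
    rw [hp]
    have hinv : (0:ℝ) ≤ (v 0)⁻¹ := (inv_pos.mpr hv0pos).le
    have hg' : g ≠ 0 := ne_of_gt hgpos
    have h2 : _root_.enorm (fun i : Fin m => v i.succ) ≤ _root_.enorm e * v 0 * (5 / (3 * g)) := by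
      have h3 : _root_.enorm (fun i : Fin m => v i.succ)
          = _root_.enorm (fun i : Fin m => v i.succ) * (3 * g / 5) * (5 / (3 * g)) := by
        field_simp
      rw [h3]
      exact mul_le_mul_of_nonneg_right hkey (by positivity)
    have h5 : _root_.enorm (fun i : Fin m => v i.succ) * (v 0)⁻¹ ≤ _root_.enorm e * (5 / (3 * g)) := by
      calc _root_.enorm (fun i : Fin m => v i.succ) * (v 0)⁻¹
          ≤ _root_.enorm e * v 0 * (5 / (3 * g)) * (v 0)⁻¹ :=
            mul_le_mul_of_nonneg_right h2 hinv
        _ = _root_.enorm e * (5 / (3 * g)) * (v 0 * (v 0)⁻¹) := by ring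
        _ = _root_.enorm e * (5 / (3 * g)) := by
            rw [mul_inv_cancel₀ (ne_of_gt hv0pos), mul_one]
    refine h5.trans ?_
    have h6 : (5 : ℝ) / (3 * g) ≤ 4 / g := by
      rw [div_le_div_iff₀ (by positivity) hgpos]
      nlinarith [hgpos]
    calc _root_.enorm e * (5 / (3 * g)) ≤ _root_.enorm e * (4 / g) :=
          mul_le_mul_of_nonneg_left h6 (enorm_nonneg' e)
      _ = (4 / g) * _root_.enorm e := mul_comm _ _
  · -- main conclusions
    intro q1 hq1 Q2 hQ2 qhat1 hqhat
    set p : Fin m → ℝ := fun i => v i.succ / v 0 with hpdef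
    have hipp : 1 + ip p p = ((v 0)⁻¹) ^ 2 := by
      have h1 : ip p p = (∑ i : Fin m, v i.succ ^ 2) * ((v 0)⁻¹) ^ 2 := by
        unfold ip
        rw [Finset.sum_mul]
        refine Finset.sum_congr rfl fun i _ => ?_
        show (v i.succ / v 0) * (v i.succ / v 0) = _
        rw [div_eq_mul_inv]; ring
      rw [h1]
      have h2 : ∑ i : Fin m, v i.succ ^ 2 = 1 - v 0 ^ 2 := by linarith [hsplit]
      rw [h2]
      field_simp
      ring
    have hsqrt : Real.sqrt (1 + ip p p) = (v 0)⁻¹ := by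
      rw [hipp]
      exact Real.sqrt_sq (le_of_lt (inv_pos.mpr hv0pos))
    have hconsv : v 0 • (Fin.cons 1 p : Fin (m + 1) → ℝ) = v := by
      funext i
      refine Fin.cases ?_ ?_ i
      · simp [Fin.cons_zero]
      · intro j
        simp only [Pi.smul_apply, Fin.cons_succ, smul_eq_mul, hpdef]
        field_simp
    have hq1v : q1 + Q2 *ᵥ p = Q *ᵥ (Fin.cons 1 p : Fin (m + 1) → ℝ) := by
      funext i
      have h1 : (Q *ᵥ (Fin.cons 1 p : Fin (m + 1) → ℝ)) i
          = Q i 0 * 1 + ∑ j : Fin m, Q i j.succ * p j := by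
        show ∑ j, Q i j * (Fin.cons 1 p : Fin (m + 1) → ℝ) j = _
        rw [Fin.sum_univ_succ]
        simp [Fin.cons_zero, Fin.cons_succ]
      rw [h1, hq1, hQ2]
      show Q i 0 + ∑ j, (Matrix.of fun i j => Q i (Fin.succ j)) i j * p j = _
      simp [Matrix.of_apply]
    have hqhatv : qhat1 = Q *ᵥ v := by
      rw [hqhat, hsqrt, inv_inv, hq1v, ← mulVec_smul, hconsv]
    have hAE : A + E = Q * B * Qᵀ := by
      rw [hBdef]
      calc A + E = (Q * Qᵀ) * (A + E) * (Q * Qᵀ) := by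
            rw [hQQ, Matrix.one_mul, Matrix.mul_one]
        _ = Q * (Qᵀ * (A + E) * Q) * Qᵀ := by
            simp only [Matrix.mul_assoc]
    refine ⟨?_, ⟨μ, ?_, ?_⟩, ?_⟩
    · rw [hqhatv, enorm_mulVec_orth Q hQ]
      exact enorm_eq_one_of_sum_sq hunit
    · rw [hqhatv, hAE, mulVec_mulVec]
      have hQB : Q * B * Qᵀ * Q = Q * B := by
        rw [Matrix.mul_assoc (Q * B), hQ, Matrix.mul_one]
      rw [hQB, ← mulVec_mulVec, heig, mulVec_smul]
    · intro ν x hx hex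
      have hyx : Q *ᵥ (Qᵀ *ᵥ x) = x := by rw [mulVec_mulVec, hQQ, one_mulVec]
      have hyne : Qᵀ *ᵥ x ≠ 0 := fun h => hx (by rw [← hyx, h, mulVec_zero])
      have hBy : B *ᵥ (Qᵀ *ᵥ x) = ν • (Qᵀ *ᵥ x) := by
        rw [mulVec_mulVec, hBdef]
        have hQB : Qᵀ * (A + E) * Q * Qᵀ = Qᵀ * (A + E) := by
          rw [Matrix.mul_assoc (Qᵀ * (A + E)), hQQ, Matrix.mul_one]
        rw [hQB, ← mulVec_mulVec, hex, mulVec_smul]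
      exact eig_le_max U B μs hUtU hUUt hspec μ hμmax ν (Qᵀ *ᵥ x) hyne hBy
    · -- spectral norm bound
      have hq1single : q1 = Q *ᵥ Pi.single 0 1 := by
        rw [hq1]; funext i; simp [mulVec_single]
      have hq1unit : ∑ i, q1 i ^ 2 = 1 := by
        rw [hq1single, sum_sq_mulVec_orth Q hQ]
        simp [Pi.single_apply, sq]
      have hqhatunit : ∑ i, qhat1 i ^ 2 = 1 := by
        rw [hqhatv, sum_sq_mulVec_orth Q hQ]
        exact hunit
      have hipq : ip q1 qhat1 = v 0 := by
        rw [hq1single, hqhatv, ip_mulVec_orth Q hQ]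
        unfold ip
        simp [Pi.single_apply]
      have h1c : 1 - (ip q1 qhat1) ^ 2 = ∑ i : Fin m, v i.succ ^ 2 := by
        rw [hipq]; linarith [hsplit]
      apply Real.sSup_le
      · rintro z ⟨x, hxmem, rfl⟩
        have hxs : ∑ i, x i ^ 2 = 1 := sum_sq_of_enorm_one hxmem
        refine (proj_diff_bound q1 qhat1 hq1unit hqhatunit x hxs).trans ?_
        rw [h1c]
        exact hwle
      · exact mul_nonneg (by positivity) (enorm_nonneg' e)
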